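/- Let f be a morphism, w an infinite word with f(w) q-quasiperiodic where 2|q| ≤ |f(α)| for all letters α. If the first letter a of w is not recurrent in w, then there exist a decomposition exhibiting words u, v and a letter b with a not occurring after its last occurrence, such that a u (b v)^ω is not quasiperiodic while f(a u (b v)^ω) is q-quasiperiodic; hence f is weakly quasiperiodic on infinite words. -/

import Mathlib

namespace QPm

variable {A : Type*}

/-- Image of a finite word under a morphism given by images of letters. -/
def applyF (f : A → List A) (w : List A) : List A := (w.map f).flatten

/-- A morphism is non-erasing if images of letters are nonempty. -/
def NonErasing (f : A → List A) : Prop := ∀ a, f a ≠ []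

/-- `wpow u k` is the `k`-fold concatenation `u^k`. -/
def wpow (u : List A) (k : ℕ) : List A := (List.replicate k u).flatten

/-- Every position of `w` is covered by an occurrence of `q` in `w`. -/
def Covers (q w : List A) : Prop :=
  ∀ i < w.length, ∃ j, j ≤ i ∧ i < j + q.length ∧ j + q.length ≤ w.length ∧
    (w.drop j).take q.length = q

/-- `w` is `q`-quasiperiodic. -/
def QP (q w : List A) : Prop := q ≠ [] ∧ w ≠ q ∧ Covers q w

def Quasiperiodic (w : List A) : Prop := ∃ q, QP q w

def Superprimitive (w : List A) : Prop := ¬ Quasiperiodic w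

/-- `q` is THE quasiperiod (shortest quasiperiod) of `w`. -/
def IsQuasiperiod (q w : List A) : Prop :=
  QP q w ∧ ∀ q', QP q' w → q.length ≤ q'.length

/-- Every position of the infinite word `x` is covered by an occurrence of `q`. -/
def InfCovers (q : List A) (x : ℕ → A) : Prop :=
  ∀ i : ℕ, ∃ j, j ≤ i ∧ i < j + q.length ∧
    ∀ t (ht : t < q.length), x (j + t) = q.get ⟨t, ht⟩

/-- The infinite word `x` is `q`-quasiperiodic. -/
def InfQP (q : List A) (x : ℕ → A) : Prop := q ≠ [] ∧ InfCovers q x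

def InfQuasiperiodic (x : ℕ → A) : Prop := ∃ q, InfQP q x

/-- `q` is THE quasiperiod (shortest quasiperiod) of the infinite word `x`. -/
def IsInfQuasiperiod (q : List A) (x : ℕ → A) : Prop :=
  InfQP q x ∧ ∀ q', InfQP q' x → q.length ≤ q'.length

/-- Image of an infinite word under a (non-erasing) morphism: the `n`-th letter
of `f(x)` is the `n`-th letter of the image of a sufficiently long prefix. -/
def mapInf (f : A → List A) (x : ℕ → A) (n : ℕ) : A :=
  (applyF f (List.ofFn (fun i : Fin (n + 1) => x i))).getD n (x 0)

/-- `f` maps every (nonempty) finite word to a quasiperiodic word. -/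
def StronglyQPFin (f : A → List A) : Prop :=
  ∀ w : List A, w ≠ [] → Quasiperiodic (applyF f w)

/-- `f` maps every infinite word to a quasiperiodic infinite word. -/
def StronglyQPInf (f : A → List A) : Prop :=
  ∀ x : ℕ → A, InfQuasiperiodic (mapInf f x)

/-- `f` maps some non-quasiperiodic finite word to a quasiperiodic word. -/
def WeaklyQPFin (f : A → List A) : Prop :=
  ∃ w : List A, ¬ Quasiperiodic w ∧ Quasiperiodic (applyF f w)

/-- `f` maps some non-quasiperiodic infinite word to a quasiperiodic word. -/
def WeaklyQPInf (f : A → List A) : Prop :=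
  ∃ x : ℕ → A, ¬ InfQuasiperiodic x ∧ InfQuasiperiodic (mapInf f x)

/-- The ultimately periodic infinite word `u v^ω` (with default letter `d`
used only when `v` is empty). -/
def ultPer (u v : List A) (d : A) : ℕ → A :=
  fun n => if h : n < u.length then u.get ⟨n, h⟩
           else v.getD ((n - u.length) % v.length) d

/-- A finite word is primitive if it is not a power `u^k` with `k ≥ 2`. -/
def Primitive (w : List A) : Prop :=
  ¬ ∃ (u : List A) (k : ℕ), 2 ≤ k ∧ w = wpow u k

/-- `k`-fold composition of the morphism `f`. -/
def iterF (f : A → List A) : ℕ → A → List A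
  | 0, a => [a]
  | (k + 1), a => applyF f (iterF f k a)

lemma applyF_append (f : A → List A) (l₁ l₂ : List A) :
    applyF f (l₁ ++ l₂) = applyF f l₁ ++ applyF f l₂ := by
  simp [applyF]

def pref (y : ℕ → A) (k : ℕ) : List A := List.ofFn (fun i : Fin k => y i)

lemma pref_succ (y : ℕ → A) (k : ℕ) : pref y (k+1) = pref y k ++ [y k] := by
  rw [pref, List.ofFn_succ']
  simp [pref, List.concat_eq_append]

def TL (f : A → List A) (y : ℕ → A) (k : ℕ) : ℕ := (applyF f (pref y k)).length

lemma TL_zero (f : A → List A) (y : ℕ → A) : TL f y 0 = 0 := by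
  simp [TL, pref, applyF]

lemma TL_succ (f : A → List A) (y : ℕ → A) (k : ℕ) :
    TL f y (k+1) = TL f y k + (f (y k)).length := by
  rw [TL, pref_succ, applyF_append]
  simp [TL, applyF]

lemma flen_pos (f : A → List A) (hf : NonErasing f) (a : A) : 1 ≤ (f a).length := by
  have := hf a
  cases h : f a with
  | nil => exact absurd h this
  | cons x l => simp

lemma TL_le (f : A → List A) (hf : NonErasing f) (y : ℕ → A) (k : ℕ) : k ≤ TL f y k := by
  induction k with
  | zero => simp [TL_zero]
  | succ k ih =>
    have := flen_pos f hf (y k)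
    rw [TL_succ]; omega

lemma TL_mono (f : A → List A) (y : ℕ → A) {k k' : ℕ} (h : k ≤ k') :
    TL f y k ≤ TL f y k' := by
  induction k' with
  | zero => have : k = 0 := by omega
            simp [this]
  | succ k' ih =>
    rcases Nat.lt_or_ge k (k'+1) with h' | h'
    · have := ih (by omega)
      rw [TL_succ]; omega
    · have : k = k' + 1 := by omega
      subst this; rfl

lemma pref_split (y : ℕ → A) {K K' : ℕ} (h : K ≤ K') :
    pref y K' = pref y K ++ List.ofFn (fun j : Fin (K' - K) => y (K + j)) := by
  have hK : K' = K + (K' - K) := by omega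
  conv_lhs => rw [hK]
  rw [pref, List.ofFn_add]
  simp [pref]

lemma getD_stable (f : A → List A) (y : ℕ → A) {K K' n : ℕ} (h : K ≤ K')
    (hn : n < TL f y K) :
    (applyF f (pref y K')).getD n (y 0) = (applyF f (pref y K)).getD n (y 0) := by
  rw [pref_split y h, applyF_append]
  exact List.getD_append _ _ _ _ hn

lemma mapInf_eq (f : A → List A) (hf : NonErasing f) (y : ℕ → A) {K n : ℕ}
    (hK : n < TL f y K) :
    mapInf f y n = (applyF f (pref y K)).getD n (y 0) := by
  have h1 : mapInf f y n = (applyF f (pref y (n+1))).getD n (y 0) := rfl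
  have h2 : n < TL f y (n+1) := by have := TL_le f hf y (n+1); omega
  rcases Nat.le_total (n+1) K with h | h
  · rw [h1, ← getD_stable f y h h2, getD_stable f y (le_refl K) hK]
  · rw [h1, getD_stable f y h hK]

lemma block_eval (f : A → List A) (hf : NonErasing f) (y : ℕ → A) {k d : ℕ}
    (hd : d < (f (y k)).length) :
    mapInf f y (TL f y k + d) = (f (y k)).getD d (y 0) := by
  have h : TL f y k + d < TL f y (k+1) := by rw [TL_succ]; omega
  rw [mapInf_eq f hf y h, pref_succ, applyF_append]
  rw [List.getD_append_right _ _ _ _ (by rw [TL]; omega)]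
  have : applyF f [y k] = f (y k) := by simp [applyF]
  rw [this]
  congr 1
  rw [TL]; omega

lemma exists_block (f : A → List A) (hf : NonErasing f) (y : ℕ → A) (i : ℕ) :
    ∃ k d, i = TL f y k + d ∧ d < (f (y k)).length := by
  induction i with
  | zero => exact ⟨0, 0, by simp [TL_zero], flen_pos f hf (y 0)⟩
  | succ i ih =>
    obtain ⟨k, d, hi, hd⟩ := ih
    rcases Nat.lt_or_ge (d+1) (f (y k)).length with h | h
    · exact ⟨k, d+1, by omega, h⟩
    · refine ⟨k+1, 0, ?_, flen_pos f hf (y (k+1))⟩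
      rw [TL_succ]; omega


lemma not_infQP_of_unique (x : ℕ → A) (hx : ∀ k, 1 ≤ k → x k ≠ x 0) :
    ¬ InfQuasiperiodic x := by
  rintro ⟨q', hcov⟩
  obtain ⟨hne, hcov⟩ := hcov
  have hql : 0 < q'.length := List.length_pos_iff.mpr hne
  obtain ⟨j, hj0, hjl, hval⟩ := hcov 0
  have hj : j = 0 := by omega
  subst hj
  have h0 : q'.get ⟨0, hql⟩ = x 0 := (hval 0 hql).symm
  obtain ⟨j', hj'le, hj'lt, hval'⟩ := hcov q'.length
  have hj1 : 1 ≤ j' := by omega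
  have := hval' 0 hql
  rw [Nat.add_zero, h0] at this
  exact hx j' hj1 this

theorem stmt19 {A : Type*} [DecidableEq A] (f : A → List A)
    (hf : NonErasing f) (w : ℕ → A) (q : List A)
    (hq : InfQP q (mapInf f w)) (hlen : ∀ α : A, 2 * q.length ≤ (f α).length)
    (hnr : ∃ N : ℕ, ∀ n, N ≤ n → w n ≠ w 0) :
    (∃ (u v : List A) (b : A),
      u.count (w 0) = 0 ∧ v.count (w 0) = 0 ∧ b ≠ w 0 ∧
      ¬ InfQuasiperiodic (ultPer ([w 0] ++ u) ([b] ++ v) (w 0)) ∧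
      InfQP q (mapInf f (ultPer ([w 0] ++ u) ([b] ++ v) (w 0)))) ∧
    WeaklyQPInf f := by
  obtain ⟨hqne, hqcov⟩ := hq
  have hql : 1 ≤ q.length := List.length_pos_iff.mpr hqne
  obtain ⟨N, hN⟩ := hnr
  classical
  -- every letter of the image is a letter of q
  have hletter : ∀ p, mapInf f w p ∈ q.toFinset := by
    intro p
    obtain ⟨j, hjle, hjlt, hval⟩ := hqcov p
    have ht : p - j < q.length := by omega
    have h1 := hval (p - j) ht
    rw [show j + (p - j) = p from by omega] at h1
    rw [h1]
    exact List.mem_toFinset.mpr (q.get_mem _)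
  -- q is a prefix of the image of w
  have hqpre : ∀ t (ht : t < q.length), mapInf f w t = q.get ⟨t, ht⟩ := by
    intro t ht
    obtain ⟨j, hjle, hjlt, hval⟩ := hqcov 0
    have hj : j = 0 := by omega
    subst hj
    simpa using hval t ht
  -- the last occurrence of the letter a = w 0
  have hne0 : ((Finset.range (N+1)).filter (fun t => w t = w 0)).Nonempty := ⟨0, by simp⟩
  set ms := ((Finset.range (N+1)).filter (fun t => w t = w 0)).max' hne0 with hmsdef
  have hmem := Finset.max'_mem _ hne0
  rw [Finset.mem_filter] at hmem
  have hwms : w ms = w 0 := hmem.2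
  have hma : ∀ t, ms < t → w t ≠ w 0 := by
    intro t hmt hwt
    rcases Nat.lt_or_ge t (N+1) with h | h
    · have h2 : t ∈ (Finset.range (N+1)).filter (fun t => w t = w 0) := by
        rw [Finset.mem_filter]; exact ⟨Finset.mem_range.mpr h, hwt⟩
      have := Finset.le_max' _ t h2
      omega
    · exact hN t (by omega) hwt
  -- pigeonhole on boundary windows of length 2|q|
  obtain ⟨t₁, t₂, ht12, heqw⟩ :
      ∃ t₁ t₂ : ℕ, t₁ < t₂ ∧ ∀ e, e < 2 * q.length →
      mapInf f w (TL f w (ms + 1 + t₁) - q.length + e)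
        = mapInf f w (TL f w (ms + 1 + t₂) - q.length + e) := by
    set V : ℕ → (Fin (2 * q.length) → {y // y ∈ q.toFinset}) :=
      fun t i => ⟨mapInf f w (TL f w (ms + 1 + t) - q.length + i), hletter _⟩ with hV
    obtain ⟨s₁, s₂, hne, heq⟩ := Finite.exists_ne_map_eq_of_infinite V
    have key : ∀ r₁ r₂, V r₁ = V r₂ → ∀ e, e < 2*q.length →
        mapInf f w (TL f w (ms+1+r₁) - q.length + e)
          = mapInf f w (TL f w (ms+1+r₂) - q.length + e) := by
      intro r₁ r₂ hs e he
      have h2 := congrFun hs ⟨e, he⟩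
      simpa [hV] using congrArg Subtype.val h2
    rcases hne.lt_or_gt with h | h
    · exact ⟨s₁, s₂, h, key _ _ heq⟩
    · exact ⟨s₂, s₁, h, key _ _ heq.symm⟩
  set n := t₁ + 1 with hndef
  set m := t₂ + 1 with hmdef
  have hnm : n < m := by omega
  have hn1 : 1 ≤ n := by omega
  set N' := ms + n with hN'def
  set M := ms + m with hMdef
  have heq : ∀ e, e < 2*q.length →
      mapInf f w (TL f w N' - q.length + e) = mapInf f w (TL f w M - q.length + e) := by
    intro e he
    rw [show N' = ms + 1 + t₁ from by omega, show M = ms + 1 + t₂ from by omega]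
    exact heqw e he
  -- the words u, v and letter b
  set u : List A := List.ofFn (fun i : Fin t₁ => w (ms + 1 + i)) with hu
  set v : List A := List.ofFn (fun i : Fin (t₂ - t₁ - 1) => w (N' + 1 + i)) with hv
  set b := w N' with hbdef
  set x := ultPer ([w 0] ++ u) ([b] ++ v) (w 0) with hxdef
  set ρ : ℕ → ℕ := fun k => if k < n then k else n + (k - n) % (m - n) with hρ
  have hρ0 : ρ 0 = 0 := by simp [hρ]
  have hρpos : ∀ k, 1 ≤ k → 1 ≤ ρ k := by
    intro k hk
    simp only [hρ]
    split <;> omega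
  have hρlt : ∀ k, ρ k < m := by
    intro k
    simp only [hρ]
    split
    · omega
    · have := Nat.mod_lt (k - n) (show 0 < m - n from by omega)
      omega
  have hρsucc : ∀ k, ρ (k+1) = ρ k + 1 ∨ (ρ k = m - 1 ∧ ρ (k+1) = n) := by
    intro k
    rcases Nat.lt_or_ge (k+1) n with h | h
    · left
      simp only [hρ, if_pos h, if_pos (show k < n from by omega)]
    · rcases Nat.lt_or_ge k n with h2 | h2
      · have hkn : k + 1 = n := by omega
        left
        simp only [hρ, if_pos h2, if_neg (show ¬ k+1 < n from by omega)]
        rw [show k + 1 - n = 0 from by omega]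
        simp
        omega
      · have hmn : 1 ≤ m - n := by omega
        simp only [hρ, if_neg (show ¬ k+1 < n from by omega),
          if_neg (show ¬ k < n from by omega)]
        rw [show k + 1 - n = (k - n) + 1 from by omega]
        have h3 : ((k-n) % (m-n) + 1) % (m-n) = ((k-n) + 1) % (m-n) := Nat.mod_add_mod _ _ _
        have hrlt : (k - n) % (m-n) < m - n := Nat.mod_lt _ (by omega)
        rcases Nat.lt_or_ge ((k-n) % (m-n) + 1) (m-n) with h4 | h4
        · left
          rw [← h3, Nat.mod_eq_of_lt h4]
          omega
        · right
          have hr1 : (k-n) % (m-n) + 1 = m - n := by omega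
          constructor
          · omega
          · rw [← h3, hr1, Nat.mod_self]
  have hρ1 : ρ 1 = 1 := by
    rcases Nat.lt_or_ge 1 n with h | h
    · simp [hρ, h]
    · have hn1' : n = 1 := by omega
      simp [hρ, hn1']
  have hulen : ([w 0] ++ u).length = n := by simp [hu, hndef]
  have hvlen : ([b] ++ v).length = m - n := by simp [hv]; omega
  -- evaluation of the ultimately periodic word x
  have hxval : ∀ k, x k = w (ms + ρ k) := by
    intro k
    rw [hxdef]
    simp only [ultPer]
    rcases Nat.lt_or_ge k n with h | h
    · rw [dif_pos (show k < ([w 0] ++ u).length from by omega)]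
      simp only [hρ, if_pos h]
      cases k with
      | zero => simpa using hwms.symm
      | succ j =>
        have hj : j < t₁ := by omega
        have hju : j < u.length := by rw [hu]; simpa using hj
        have hval : u.getD j (w 0) = w (ms + 1 + j) := by
          rw [hu, List.getD_eq_getElem _ _ (by simpa using hj)]
          simp
        simp only [List.singleton_append, List.get_eq_getElem, List.getElem_cons_succ]
        rw [← List.getD_eq_getElem u (w 0), hval]
        congr 1
        omega
    · rw [dif_neg (show ¬ k < ([w 0] ++ u).length from by omega)]
      rw [hulen, hvlen]
      have hrlt : (k - n) % (m - n) < m - n := Nat.mod_lt _ (by omega)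
      simp only [hρ, if_neg (show ¬ k < n from by omega)]
      cases hc : (k - n) % (m - n) with
      | zero =>
        simp only [List.singleton_append, List.getD_cons_zero]
        rfl
      | succ j =>
        have hj : j < t₂ - t₁ - 1 := by omega
        have hval : v.getD j (w 0) = w (N' + 1 + j) := by
          rw [hv, List.getD_eq_getElem _ _ (by simpa using hj)]
          simp
        simp only [List.singleton_append, List.getD_cons_succ]
        rw [hval]
        congr 1
        omega
  have hx0w : x 0 = w 0 := by rw [hxval 0, hρ0]; simpa using hwms
  -- the required membership conditions
  have hucount : u.count (w 0) = 0 := by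
    rw [List.count_eq_zero]
    intro hmem
    rw [hu, List.mem_ofFn] at hmem
    obtain ⟨i, hi⟩ := hmem
    exact hma _ (by omega) hi
  have hvcount : v.count (w 0) = 0 := by
    rw [List.count_eq_zero]
    intro hmem
    rw [hv, List.mem_ofFn] at hmem
    obtain ⟨i, hi⟩ := hmem
    exact hma _ (by omega) hi
  have hbne : b ≠ w 0 := hma N' (by omega)
  -- x is not quasiperiodic
  have hxnot : ¬ InfQuasiperiodic x := by
    apply not_infQP_of_unique
    intro k hk
    rw [hxval k, hx0w]
    exact hma _ (by have := hρpos k hk; omega)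
  -- length bounds
  have hTx1 : ∀ k, 1 ≤ k → 2*q.length ≤ TL f x k := by
    intro k hk
    have h0 : TL f x 0 = 0 := TL_zero f x
    have h1 : TL f x 1 = TL f x 0 + (f (x 0)).length := TL_succ f x 0
    have h2 := TL_mono f x hk
    have := hlen (x 0)
    omega
  have hSw1 : ∀ k, 1 ≤ k → 2*q.length ≤ TL f w k := by
    intro k hk
    have h0 : TL f w 0 = 0 := TL_zero f w
    have h1 : TL f w 1 = TL f w 0 + (f (w 0)).length := TL_succ f w 0
    have h2 := TL_mono f w hk
    have := hlen (w 0)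
    omega
  -- the window transfer lemma
  have hW : ∀ k, 1 ≤ k → ∀ e, e < 2*q.length + (f (x k)).length →
      mapInf f x (TL f x k - q.length + e)
        = mapInf f w (TL f w (ms + ρ k) - q.length + e) := by
    intro k hk e he
    obtain ⟨k', rfl⟩ : ∃ k', k = k' + 1 := ⟨k-1, by omega⟩
    have hgpos : 1 ≤ ρ (k'+1) := hρpos _ (by omega)
    obtain ⟨g', hg'⟩ : ∃ g', ms + ρ (k'+1) = g' + 1 := ⟨ms + ρ (k'+1) - 1, by omega⟩
    rw [hg']
    have hLx : 2*q.length ≤ (f (x k')).length := hlen _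
    have hLw : 2*q.length ≤ (f (w g')).length := hlen _
    have hTxk : TL f x (k'+1) = TL f x k' + (f (x k')).length := TL_succ f x k'
    have hSwg : TL f w (g'+1) = TL f w g' + (f (w g')).length := TL_succ f w g'
    have hTxpos : 2*q.length ≤ TL f x (k'+1) := hTx1 _ (by omega)
    have hSwpos : 2*q.length ≤ TL f w (g'+1) := hSw1 _ (by omega)
    have hxk : x (k'+1) = w (g'+1) := by rw [hxval]; congr 1
    have hflen : (f (x (k'+1))).length = (f (w (g'+1))).length := by rw [hxk]
    rcases Nat.lt_or_ge e q.length with he1 | he1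
    · -- inside the suffix of the previous block
      rw [show TL f x (k'+1) - q.length + e
            = TL f x k' + ((f (x k')).length - q.length + e) from by omega]
      rw [show TL f w (g'+1) - q.length + e
            = TL f w g' + ((f (w g')).length - q.length + e) from by omega]
      rw [block_eval f hf x (show (f (x k')).length - q.length + e < (f (x k')).length from by omega)]
      rw [block_eval f hf w (show (f (w g')).length - q.length + e < (f (w g')).length from by omega)]
      rcases hρsucc k' with hs | hs
      · have hxk' : x k' = w g' := by rw [hxval k']; congr 1; omega
        rw [hxk', hx0w]
      · -- wrap : the suffixes of blocks M-1 and N'-1 agree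
        have hxk' : x k' = w (M - 1) := by rw [hxval k']; congr 1; omega
        have hg'N : g' = N' - 1 := by omega
        have hN1 : 1 ≤ N' := by omega
        have hM1 : 1 ≤ M := by omega
        have e1 : (f (w (M-1))).getD ((f (w (M-1))).length - q.length + e) (w 0)
            = mapInf f w (TL f w M - q.length + e) := by
          have hTM : TL f w M = TL f w (M-1) + (f (w (M-1))).length := by
            have h5 : TL f w (M-1+1) = TL f w (M-1) + (f (w (M-1))).length := TL_succ f w (M-1)
            rw [show M - 1 + 1 = M from by omega] at h5
            exact h5
          have hl := hlen (w (M-1))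
          have hSM : 2*q.length ≤ TL f w M := hSw1 _ (by omega)
          rw [show TL f w M - q.length + e
                = TL f w (M-1) + ((f (w (M-1))).length - q.length + e) from by omega]
          rw [block_eval f hf w (by omega)]
        have e2 : (f (w (N'-1))).getD ((f (w (N'-1))).length - q.length + e) (w 0)
            = mapInf f w (TL f w N' - q.length + e) := by
          have hTM : TL f w N' = TL f w (N'-1) + (f (w (N'-1))).length := by
            have h5 : TL f w (N'-1+1) = TL f w (N'-1) + (f (w (N'-1))).length := TL_succ f w (N'-1)
            rw [show N' - 1 + 1 = N' from by omega] at h5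
            exact h5
          have hl := hlen (w (N'-1))
          have hSN : 2*q.length ≤ TL f w N' := hSw1 _ (by omega)
          rw [show TL f w N' - q.length + e
                = TL f w (N'-1) + ((f (w (N'-1))).length - q.length + e) from by omega]
          rw [block_eval f hf w (by omega)]
        rw [hxk', hx0w, hg'N, e1, e2]
        exact (heq e (by omega)).symm
    · rcases Nat.lt_or_ge e (q.length + (f (x (k'+1))).length) with he2 | he2
      · -- inside the current block
        rw [show TL f x (k'+1) - q.length + e = TL f x (k'+1) + (e - q.length) from by omega]
        rw [show TL f w (g'+1) - q.length + e = TL f w (g'+1) + (e - q.length) from by omega]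
        rw [block_eval f hf x (show e - q.length < (f (x (k'+1))).length from by omega)]
        rw [block_eval f hf w (show e - q.length < (f (w (g'+1))).length from by omega)]
        rw [hxk, hx0w]
      · -- inside the prefix of the next block
        have hdlt : e - q.length - (f (x (k'+1))).length < q.length := by omega
        have hT2 : TL f x (k'+2) = TL f x (k'+1) + (f (x (k'+1))).length := TL_succ f x (k'+1)
        have hS2 : TL f w (g'+2) = TL f w (g'+1) + (f (w (g'+1))).length := TL_succ f w (g'+1)
        rw [show TL f x (k'+1) - q.length + e
              = TL f x (k'+2) + (e - q.length - (f (x (k'+1))).length) from by omega]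
        rw [show TL f w (g'+1) - q.length + e
              = TL f w (g'+2) + (e - q.length - (f (x (k'+1))).length) from by omega]
        rw [block_eval f hf x
          (show e - q.length - (f (x (k'+1))).length < (f (x (k'+2))).length from by
            have := hlen (x (k'+2)); omega)]
        rw [block_eval f hf w
          (show e - q.length - (f (x (k'+1))).length < (f (w (g'+2))).length from by
            have := hlen (w (g'+2)); omega)]
        rcases hρsucc (k'+1) with hs | hs
        · have hs2 : ρ (k'+2) = ρ (k'+1) + 1 := hs
          have hx2 : x (k'+2) = w (g'+2) := by rw [hxval]; congr 1; omega
          rw [hx2, hx0w]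
        · -- wrap : the prefixes of blocks N' and M agree
          have hs2 : ρ (k'+2) = n := hs.2
          have hs1 : ρ (k'+1) = m - 1 := hs.1
          have hx2 : x (k'+2) = w N' := by rw [hxval]; congr 1; omega
          have hMeq : g' + 2 = M := by omega
          rw [hx2, hMeq, hx0w]
          have hdq : e - q.length - (f (x (k'+1))).length < q.length := hdlt
          have eN : (f (w N')).getD (e - q.length - (f (x (k'+1))).length) (w 0)
              = mapInf f w (TL f w N' + (e - q.length - (f (x (k'+1))).length)) :=
            (block_eval f hf w (show _ < (f (w N')).length from by have := hlen (w N'); omega)).symm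
          have eM : (f (w M)).getD (e - q.length - (f (x (k'+1))).length) (w 0)
              = mapInf f w (TL f w M + (e - q.length - (f (x (k'+1))).length)) :=
            (block_eval f hf w (show _ < (f (w M)).length from by have := hlen (w M); omega)).symm
          rw [eN, eM]
          have hSN : 2*q.length ≤ TL f w N' := hSw1 _ (by omega)
          have hSM : 2*q.length ≤ TL f w M := hSw1 _ (by omega)
          rw [show TL f w N' + (e - q.length - (f (x (k'+1))).length)
                = TL f w N' - q.length + (q.length + (e - q.length - (f (x (k'+1))).length)) from by omega]
          rw [show TL f w M + (e - q.length - (f (x (k'+1))).length)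
                = TL f w M - q.length + (q.length + (e - q.length - (f (x (k'+1))).length)) from by omega]
          exact heq _ (by omega)
  -- transfer near the origin
  have hbase2 : ∀ p, p < TL f x 2 → mapInf f x p = mapInf f w (TL f w ms + p) := by
    intro p hp
    have hx0 : x 0 = w ms := by rw [hxval 0, hρ0, Nat.add_zero]
    have hx1 : x 1 = w (ms + 1) := by rw [hxval 1, hρ1]
    have hTL0 : TL f x 0 = 0 := TL_zero f x
    have hT1 : TL f x 1 = TL f x 0 + (f (x 0)).length := TL_succ f x 0
    have hT2 : TL f x 2 = TL f x 1 + (f (x 1)).length := TL_succ f x 1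
    have hSms : TL f w (ms+1) = TL f w ms + (f (w ms)).length := TL_succ f w ms
    have hx0l : (f (x 0)).length = (f (w ms)).length := by rw [hx0]
    rcases Nat.lt_or_ge p (TL f x 1) with h | h
    · have hplt : p < (f (x 0)).length := by omega
      have l1 : mapInf f x p = (f (x 0)).getD p (x 0) := by
        have h2 := block_eval f hf x hplt
        rw [hTL0, Nat.zero_add] at h2
        exact h2
      have hplt' : p < (f (w ms)).length := by omega
      have l2 : mapInf f w (TL f w ms + p) = (f (w ms)).getD p (w 0) :=
        block_eval f hf w hplt'
      rw [l1, l2, hx0w, hwms]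
    · have hplt : p - TL f x 1 < (f (x 1)).length := by omega
      have l1 : mapInf f x p = (f (x 1)).getD (p - TL f x 1) (x 0) := by
        have h2 := block_eval f hf x hplt
        rw [show TL f x 1 + (p - TL f x 1) = p from by omega] at h2
        exact h2
      have hplt' : p - TL f x 1 < (f (w (ms+1))).length := by rw [← hx1]; exact hplt
      have l2 : mapInf f w (TL f w (ms+1) + (p - TL f x 1)) = (f (w (ms+1))).getD (p - TL f x 1) (w 0) :=
        block_eval f hf w hplt'
      rw [show TL f w ms + p = TL f w (ms+1) + (p - TL f x 1) from by omega]
      rw [l1, l2, hx1, hx0w]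
  -- the image of x is q-quasiperiodic
  have hxqp : InfQP q (mapInf f x) := by
    refine ⟨hqne, ?_⟩
    intro i
    obtain ⟨k, d, hi, hd⟩ := exists_block f hf x i
    rcases Nat.eq_zero_or_pos k with hk0 | hkpos
    · subst hk0
      rw [TL_zero, Nat.zero_add] at hi
      rcases Nat.lt_or_ge i q.length with hi1 | hi1
      · refine ⟨0, by omega, by omega, ?_⟩
        intro t ht
        have h1 : mapInf f x t = (f (x 0)).getD t (x 0) := by
          have h2 := block_eval f hf x (show t < (f (x 0)).length from by have := hlen (x 0); omega)
          rw [TL_zero, Nat.zero_add] at h2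
          exact h2
        have h2 : mapInf f w t = (f (w 0)).getD t (w 0) := by
          have h3 := block_eval f hf w (show t < (f (w 0)).length from by have := hlen (w 0); omega)
          rw [TL_zero, Nat.zero_add] at h3
          exact h3
        rw [Nat.zero_add, h1, hx0w, ← h2]
        exact hqpre t ht
      · obtain ⟨j', hj'le, hj'lt, hval⟩ := hqcov (TL f w ms + i)
        refine ⟨j' - TL f w ms, by omega, by omega, ?_⟩
        intro t ht
        have hTL0 : TL f x 0 = 0 := TL_zero f x
        have hT1 : TL f x 1 = TL f x 0 + (f (x 0)).length := TL_succ f x 0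
        have hT2 : TL f x 2 = TL f x 1 + (f (x 1)).length := TL_succ f x 1
        have hfx1 := hlen (x 1)
        have hlt : j' - TL f w ms + t < TL f x 2 := by omega
        rw [hbase2 _ hlt]
        rw [show TL f w ms + (j' - TL f w ms + t) = j' + t from by omega]
        exact hval t ht
    · obtain ⟨j', hj'le, hj'lt, hval⟩ := hqcov (TL f w (ms + ρ k) + d)
      have hTxk : 2*q.length ≤ TL f x k := hTx1 k hkpos
      have hg1 : 1 ≤ ms + ρ k := by have := hρpos k hkpos; omega
      have hSg : 2*q.length ≤ TL f w (ms + ρ k) := hSw1 _ hg1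
      refine ⟨i - (TL f w (ms + ρ k) + d - j'), by omega, by omega, ?_⟩
      intro t ht
      have he : q.length + d + t - (TL f w (ms + ρ k) + d - j') < 2*q.length + (f (x k)).length := by
        omega
      rw [show i - (TL f w (ms + ρ k) + d - j') + t
            = TL f x k - q.length + (q.length + d + t - (TL f w (ms + ρ k) + d - j')) from by omega]
      rw [hW k hkpos _ he]
      rw [show TL f w (ms + ρ k) - q.length + (q.length + d + t - (TL f w (ms + ρ k) + d - j'))
            = j' + t from by omega]
      exact hval t ht
  refine ⟨⟨u, v, b, hucount, hvcount, hbne, hxnot, hxqp⟩, ⟨x, hxnot, ⟨q, hxqp⟩⟩⟩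

end QPm
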